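/- Let Ω ⊆ ℂ be an open set containing the real interval [0,1] (viewed as a subset of ℂ), and let G : ℂ → ℂ be analytic on Ω. If for every k ≥ 0 the k-th derivative G^{(k)}(0) is a nonnegative real number, then for every x ∈ [0,1] and every k ≥ 0, G^{(k)}(x) is a nonnegative real number. -/

import Mathlib

lemma aux_mul_nonneg_real (w : ℂ) (hw : w.im = 0 ∧ 0 ≤ w.re) (c : ℝ) (hc : 0 ≤ c) :
    ((c : ℂ) * w).im = 0 ∧ 0 ≤ ((c : ℂ) * w).re := by
  constructor
  · simp [Complex.mul_im, hw.1]
  · simp only [Complex.mul_re, Complex.ofReal_re, Complex.ofReal_im, hw.1, mul_zero, zero_mul,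
      sub_zero]
    exact mul_nonneg hc hw.2

lemma aux_iteratedDeriv_add (G : ℂ → ℂ) (n k : ℕ) :
    iteratedDeriv n (iteratedDeriv k G) = iteratedDeriv (n + k) G := by
  induction n with
  | zero => simp
  | succ n ih =>
      rw [iteratedDeriv_succ, ih, ← iteratedDeriv_succ, show n + k + 1 = n + 1 + k from by omega]


/-- If `G` is analytic on an open set `Ω ⊆ ℂ` containing the real
interval `[0,1]`, and all iterated derivatives of `G` at `0` are nonnegative real
numbers, then for every `x ∈ [0,1]` and every `k`, the `k`-th derivative of `G`
at `x` is a nonnegative real number. -/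
theorem analytic_nonneg_derivs_on_unit_interval
    (Ω : Set ℂ) (hΩ : IsOpen Ω)
    (hsub : (fun t : ℝ => (t : ℂ)) '' Set.Icc (0 : ℝ) 1 ⊆ Ω)
    (G : ℂ → ℂ) (hG : AnalyticOnNhd ℂ G Ω)
    (hderiv : ∀ k : ℕ, (iteratedDeriv k G 0).im = 0 ∧ 0 ≤ (iteratedDeriv k G 0).re) :
    ∀ x : ℝ, x ∈ Set.Icc (0 : ℝ) 1 → ∀ k : ℕ,
      (iteratedDeriv k G (x : ℂ)).im = 0 ∧ 0 ≤ (iteratedDeriv k G (x : ℂ)).re := by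
  -- interval is contained in Ω
  have hmem : ∀ t : ℝ, t ∈ Set.Icc (0 : ℝ) 1 → (t : ℂ) ∈ Ω := fun t ht =>
    hsub ⟨t, ht, rfl⟩
  -- each iterated derivative is analytic on Ω
  have hDk : ∀ k : ℕ, AnalyticOnNhd ℂ (iteratedDeriv k G) Ω := by
    intro k
    rw [iteratedDeriv_eq_iterate]
    exact hG.iterated_deriv k
  -- the set of good points
  set s : Set ℝ := {t : ℝ | ∀ k : ℕ,
      (iteratedDeriv k G (t : ℂ)).im = 0 ∧ 0 ≤ (iteratedDeriv k G (t : ℂ)).re} with hs_def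
  suffices h : Set.Icc (0 : ℝ) 1 ⊆ s by
    intro x hx k
    exact h hx k
  -- closedness
  have hC : IsClosed {z : ℂ | z.im = 0 ∧ 0 ≤ z.re} :=
    (isClosed_eq Complex.continuous_im continuous_const).inter
      (isClosed_le continuous_const Complex.continuous_re)
  have hclosed : IsClosed (s ∩ Set.Icc (0 : ℝ) 1) := by
    have : s ∩ Set.Icc (0 : ℝ) 1 =
        ⋂ k : ℕ, (Set.Icc (0 : ℝ) 1 ∩
          (fun t : ℝ => iteratedDeriv k G (t : ℂ)) ⁻¹' {z : ℂ | z.im = 0 ∧ 0 ≤ z.re}) := by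
      ext t
      simp only [Set.mem_inter_iff, Set.mem_iInter, Set.mem_preimage, Set.mem_setOf_eq, hs_def]
      constructor
      · rintro ⟨h1, h2⟩ k
        exact ⟨h2, h1 k⟩
      · intro h
        exact ⟨fun k => (h k).2, (h 0).1⟩
    rw [this]
    refine isClosed_iInter fun k => ?_
    refine ContinuousOn.preimage_isClosed_of_isClosed ?_ isClosed_Icc hC
    exact ((hDk k).continuousOn.comp Complex.continuous_ofReal.continuousOn
      (fun t ht => hmem t ht))
  -- propagation step
  refine hclosed.Icc_subset_of_forall_exists_gt ?_ ?_
  · intro k; simpa using hderiv k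
  · rintro x ⟨hxs, hx0, hx1⟩ y hy
    -- a ball around x inside Ω
    obtain ⟨r, hr, hball⟩ := Metric.isOpen_iff.mp hΩ (x : ℂ) (hmem x ⟨hx0, hx1.le⟩)
    set z : ℝ := min (x + r / 2) (min y 1) with hz_def
    have hxz : x < z := by
      simp only [hz_def, lt_min_iff]
      exact ⟨by linarith, hy, hx1⟩
    have hz1 : z ≤ 1 := le_trans (min_le_right _ _) (min_le_right _ _)
    have hzy : z ≤ y := le_trans (min_le_right _ _) (min_le_left _ _)
    have hzr : z - x < r := by
      have : z ≤ x + r / 2 := min_le_left _ _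
      linarith
    have hzball : (z : ℂ) ∈ Metric.ball (x : ℂ) r := by
      rw [Metric.mem_ball, Complex.dist_eq]
      rw [← Complex.ofReal_sub, Complex.norm_real, Real.norm_eq_abs, abs_of_pos (by linarith)]
      exact hzr
    refine ⟨z, ?_, hxz, hzy⟩
    intro k
    -- Taylor series of the k-th derivative at x, evaluated at z
    have hdiff : DifferentiableOn ℂ (iteratedDeriv k G) (Metric.ball (x : ℂ) r) :=
      ((hDk k).mono hball).differentiableOn
    have hsum := Complex.hasSum_taylorSeries_on_ball hdiff hzball
    -- each term is a nonnegative real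
    have hterm : ∀ n : ℕ,
        ((n.factorial : ℂ)⁻¹ • ((z : ℂ) - (x : ℂ)) ^ n • iteratedDeriv n (iteratedDeriv k G) (x : ℂ)).im
          = 0 ∧
        0 ≤ ((n.factorial : ℂ)⁻¹ • ((z : ℂ) - (x : ℂ)) ^ n •
          iteratedDeriv n (iteratedDeriv k G) (x : ℂ)).re := by
      intro n
      have hw := hxs (n + k)
      rw [aux_iteratedDeriv_add]
      have heq : (n.factorial : ℂ)⁻¹ • ((z : ℂ) - (x : ℂ)) ^ n • iteratedDeriv (n + k) G (x : ℂ)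
          = ((((n.factorial : ℝ)⁻¹ * (z - x) ^ n : ℝ)) : ℂ) * iteratedDeriv (n + k) G (x : ℂ) := by
        simp only [smul_eq_mul]
        push_cast
        ring
      rw [heq]
      exact aux_mul_nonneg_real _ hw _
        (mul_nonneg (by positivity) (pow_nonneg (by linarith) n))
    rw [Complex.hasSum_iff] at hsum
    constructor
    · have h0 : HasSum (fun n : ℕ =>
          ((n.factorial : ℂ)⁻¹ • ((z : ℂ) - (x : ℂ)) ^ n •
            iteratedDeriv n (iteratedDeriv k G) (x : ℂ)).im) 0 := by
        have : (fun n : ℕ =>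
            ((n.factorial : ℂ)⁻¹ • ((z : ℂ) - (x : ℂ)) ^ n •
              iteratedDeriv n (iteratedDeriv k G) (x : ℂ)).im) = fun _ => (0 : ℝ) := by
          funext n; exact (hterm n).1
        rw [this]
        exact hasSum_zero
      exact (hsum.2.unique h0)
    · exact hsum.1.nonneg fun n => (hterm n).2
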